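/- Fix e > 0 (the elementary charge), T > 0, μ ∈ ℝ, and for b > 0 let e_{n,b} = b(n + 1/2), n(b,T,μ) = (b/(2π)) Σ_{n=0}^{∞} (e^{(e_{n,b} − μ)/T} + 1)^{−1}, and m_circ(b,T,μ) = e (b/(2π)) Σ_{n=0}^{∞} (n + 1/2) (e^{(e_{n,b} − μ)/T} + 1)^{−1}. Then all three series converge, b ↦ n(b,T,μ) and μ ↦ m_circ(b,T,μ) are differentiable, and e² ∂_b n(b,T,μ) + e ∂_μ m_circ(b,T,μ) = e² n(b,T,μ)/b. -/

import Mathlib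

open Real

noncomputable section

/-- The Landau particle density `n(b,T,μ) = (b/(2π)) Σ_n (e^{(e_{n,b}−μ)/T} + 1)^{−1}`. -/
def landauDensity (b T μ : ℝ) : ℝ :=
  b / (2 * Real.pi) * ∑' n : ℕ, (Real.exp ((b * (n + 1 / 2) - μ) / T) + 1)⁻¹

/-- The circulating magnetization
`m_circ(b,T,μ) = e (b/(2π)) Σ_n (n + 1/2)(e^{(e_{n,b}−μ)/T} + 1)^{−1}`. -/
def landauMcirc (e b T μ : ℝ) : ℝ :=
  e * (b / (2 * Real.pi)) * ∑' n : ℕ, ((n : ℝ) + 1 / 2) * (Real.exp ((b * (n + 1 / 2) - μ) / T) + 1)⁻¹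

private lemma sumAux {r : ℝ} (K : ℝ) (hr0 : 0 ≤ r) (hr : r < 1) :
    Summable (fun n : ℕ => K * (((n : ℝ) + 1 / 2) * r ^ n)) := by
  have h1 : Summable (fun n : ℕ => (n : ℝ) ^ 1 * r ^ n) :=
    summable_pow_mul_geometric_of_norm_lt_one 1
      (by rwa [Real.norm_eq_abs, abs_of_nonneg hr0])
  have h2 : Summable (fun n : ℕ => r ^ n) := summable_geometric_of_lt_one hr0 hr
  have h3 := (h1.add (h2.mul_left (1 / 2))).mul_left K
  exact h3.congr fun n => by ring

/-- derivative in `b` of a single term. -/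
private lemma hdb (T μ : ℝ) (n : ℕ) (x : ℝ) :
    HasDerivAt (fun y : ℝ => (Real.exp ((y * ((n : ℝ) + 1 / 2) - μ) / T) + 1)⁻¹)
      (-(Real.exp ((x * ((n : ℝ) + 1 / 2) - μ) / T) * (((n : ℝ) + 1 / 2) / T)) /
        (Real.exp ((x * ((n : ℝ) + 1 / 2) - μ) / T) + 1) ^ 2) x := by
  have h1 : HasDerivAt (fun y : ℝ => (y * ((n : ℝ) + 1 / 2) - μ) / T)
      (((n : ℝ) + 1 / 2) / T) x := by
    simpa using (((hasDerivAt_id x).mul_const ((n : ℝ) + 1 / 2)).sub_const μ).div_const T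
  have hne : Real.exp ((x * ((n : ℝ) + 1 / 2) - μ) / T) + 1 ≠ 0 := by positivity
  exact (h1.exp.add_const 1).inv hne

/-- derivative in `μ` of a single term. -/
private lemma hdmu (b T : ℝ) (n : ℕ) (x : ℝ) :
    HasDerivAt (fun y : ℝ =>
        ((n : ℝ) + 1 / 2) * (Real.exp ((b * ((n : ℝ) + 1 / 2) - y) / T) + 1)⁻¹)
      (((n : ℝ) + 1 / 2) * (Real.exp ((b * ((n : ℝ) + 1 / 2) - x) / T) * (1 / T) /
        (Real.exp ((b * ((n : ℝ) + 1 / 2) - x) / T) + 1) ^ 2)) x := by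
  have h1 : HasDerivAt (fun y : ℝ => (b * ((n : ℝ) + 1 / 2) - y) / T) (-1 / T) x := by
    simpa using ((hasDerivAt_id x).const_sub (b * ((n : ℝ) + 1 / 2))).div_const T
  have hne : Real.exp ((b * ((n : ℝ) + 1 / 2) - x) / T) + 1 ≠ 0 := by positivity
  have h4 := ((h1.exp.add_const 1).inv hne).const_mul ((n : ℝ) + 1 / 2)
  refine h4.congr_deriv ?_
  ring

private lemma frac_le (A : ℝ) :
    Real.exp A / (Real.exp A + 1) ^ 2 ≤ Real.exp (-A) := by
  have h1 : (0:ℝ) < Real.exp A := Real.exp_pos A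
  rw [Real.exp_neg, div_le_iff₀ (by positivity)]
  nlinarith [sq_nonneg (Real.exp A), Real.exp_pos A,
    mul_pos (inv_pos.mpr h1) h1, inv_mul_cancel₀ (ne_of_gt h1)]

private lemma myInvLe (A : ℝ) : (Real.exp A + 1)⁻¹ ≤ Real.exp (-A) := by
  have h1 : (0:ℝ) < Real.exp A := Real.exp_pos A
  rw [Real.exp_neg]
  exact inv_anti₀ h1 (by linarith)

private lemma expo_mono (T : ℝ) (hT : 0 < T) {a y : ℝ} (hay : a ≤ y) {c : ℝ} (hc : 0 ≤ c)
    (μ : ℝ) : Real.exp (-((y * c - μ) / T)) ≤ Real.exp (-((a * c - μ) / T)) := by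
  apply Real.exp_le_exp.mpr
  apply neg_le_neg
  apply (div_le_div_iff_of_pos_right hT).mpr
  have := mul_le_mul_of_nonneg_right hay hc
  linarith

private lemma exp_split {T : ℝ} (hT : T ≠ 0) (b μ : ℝ) (n : ℕ) :
    Real.exp (-((b * ((n : ℝ) + 1 / 2) - μ) / T)) =
      Real.exp ((μ - b / 2) / T) * Real.exp (-(b / T)) ^ n := by
  rw [← Real.exp_nat_mul, ← Real.exp_add]
  congr 1
  field_simp
  ring

/-- **St'reda-type decomposition of the Landau Hall conductivity.**
For `e, b, T > 0` and `μ ∈ ℝ`: the series defining `n(b,T,μ)` and `m_circ(b,T,μ)` converge,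
the functions `b ↦ n(b,T,μ)` and `μ ↦ m_circ(b,T,μ)` are differentiable, and
`e² ∂_b n(b,T,μ) + e ∂_μ m_circ(b,T,μ) = e² n(b,T,μ)/b`. -/
theorem landau_streda_decomposition (e b T μ : ℝ) (he : 0 < e) (hb : 0 < b) (hT : 0 < T) :
    Summable (fun n : ℕ => (Real.exp ((b * (n + 1 / 2) - μ) / T) + 1)⁻¹) ∧
    Summable (fun n : ℕ =>
      ((n : ℝ) + 1 / 2) * (Real.exp ((b * (n + 1 / 2) - μ) / T) + 1)⁻¹) ∧
    ∃ dn dm : ℝ,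
      HasDerivAt (fun b' : ℝ => landauDensity b' T μ) dn b ∧
      HasDerivAt (fun μ' : ℝ => landauMcirc e b T μ') dm μ ∧
      e ^ 2 * dn + e * dm = e ^ 2 * landauDensity b T μ / b := by
  have hT' : T ≠ 0 := ne_of_gt hT
  have hcn : ∀ n : ℕ, (0:ℝ) ≤ (n : ℝ) + 1 / 2 := fun n => by positivity
  -- geometric ratios
  have hr1_0 : (0:ℝ) ≤ Real.exp (-(b / T)) := (Real.exp_pos _).le
  have hr1 : Real.exp (-(b / T)) < 1 := by
    rw [Real.exp_lt_one_iff]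
    have : (0:ℝ) < b / T := by positivity
    linarith
  have hr2_0 : (0:ℝ) ≤ Real.exp (-(b / 2 / T)) := (Real.exp_pos _).le
  have hr2 : Real.exp (-(b / 2 / T)) < 1 := by
    rw [Real.exp_lt_one_iff]
    have : (0:ℝ) < b / 2 / T := by positivity
    linarith
  -- summability 1
  have hs1 : Summable (fun n : ℕ => (Real.exp ((b * (n + 1 / 2) - μ) / T) + 1)⁻¹) := by
    have hsum : Summable (fun n : ℕ =>
        Real.exp ((μ - b / 2) / T) * Real.exp (-(b / T)) ^ n) :=
      (summable_geometric_of_lt_one hr1_0 hr1).mul_left _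
    apply Summable.of_nonneg_of_le (fun n => by positivity) (fun n => ?_) hsum
    exact (myInvLe _).trans_eq (exp_split hT' b μ n)
  -- summability 2
  have hs2 : Summable (fun n : ℕ =>
      ((n : ℝ) + 1 / 2) * (Real.exp ((b * (n + 1 / 2) - μ) / T) + 1)⁻¹) := by
    have hsum := sumAux (Real.exp ((μ - b / 2) / T)) hr1_0 hr1
    apply Summable.of_nonneg_of_le (fun n => by positivity) (fun n => ?_) hsum
    have h1 : (Real.exp ((b * ((n : ℝ) + 1 / 2) - μ) / T) + 1)⁻¹ ≤
        Real.exp ((μ - b / 2) / T) * Real.exp (-(b / T)) ^ n :=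
      (myInvLe _).trans_eq (exp_split hT' b μ n)
    calc ((n : ℝ) + 1 / 2) * (Real.exp ((b * ((n : ℝ) + 1 / 2) - μ) / T) + 1)⁻¹
        ≤ ((n : ℝ) + 1 / 2) * (Real.exp ((μ - b / 2) / T) * Real.exp (-(b / T)) ^ n) :=
          mul_le_mul_of_nonneg_left h1 (hcn n)
      _ = Real.exp ((μ - b / 2) / T) * (((n : ℝ) + 1 / 2) * Real.exp (-(b / T)) ^ n) := by ring
  refine ⟨hs1, hs2, ?_⟩
  -- derivative of the density series in b
  have hF : HasDerivAt (fun y : ℝ => ∑' n : ℕ,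
      (Real.exp ((y * ((n : ℝ) + 1 / 2) - μ) / T) + 1)⁻¹)
      (∑' n : ℕ, (-(Real.exp ((b * ((n : ℝ) + 1 / 2) - μ) / T) * (((n : ℝ) + 1 / 2) / T)) /
        (Real.exp ((b * ((n : ℝ) + 1 / 2) - μ) / T) + 1) ^ 2)) b := by
    refine hasDerivAt_tsum_of_isPreconnected
      (u := fun n : ℕ => Real.exp ((μ - b / 2 / 2) / T) / T *
        (((n : ℝ) + 1 / 2) * Real.exp (-(b / 2 / T)) ^ n))
      (t := Set.Ioi (b / 2)) (y₀ := b)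
      (sumAux _ hr2_0 hr2) isOpen_Ioi isPreconnected_Ioi
      (fun n y _ => hdb T μ n y) (fun n y hy => ?_) (Set.mem_Ioi.mpr (by linarith))
      hs1 (Set.mem_Ioi.mpr (by linarith))
    -- bound the derivative on Ioi (b/2)
    have hy' : b / 2 ≤ y := le_of_lt (Set.mem_Ioi.mp hy)
    have hnn : (0:ℝ) ≤ Real.exp ((y * ((n : ℝ) + 1 / 2) - μ) / T) * (((n : ℝ) + 1 / 2) / T) /
        (Real.exp ((y * ((n : ℝ) + 1 / 2) - μ) / T) + 1) ^ 2 := by positivity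
    rw [Real.norm_eq_abs, neg_div, abs_neg, abs_of_nonneg hnn]
    have h1 : Real.exp ((y * ((n : ℝ) + 1 / 2) - μ) / T) /
        (Real.exp ((y * ((n : ℝ) + 1 / 2) - μ) / T) + 1) ^ 2 ≤
        Real.exp ((μ - b / 2 / 2) / T) * Real.exp (-(b / 2 / T)) ^ n := by
      calc Real.exp ((y * ((n : ℝ) + 1 / 2) - μ) / T) /
          (Real.exp ((y * ((n : ℝ) + 1 / 2) - μ) / T) + 1) ^ 2
          ≤ Real.exp (-((y * ((n : ℝ) + 1 / 2) - μ) / T)) := frac_le _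
        _ ≤ Real.exp (-((b / 2 * ((n : ℝ) + 1 / 2) - μ) / T)) := expo_mono T hT hy' (hcn n) μ
        _ = Real.exp ((μ - b / 2 / 2) / T) * Real.exp (-(b / 2 / T)) ^ n :=
            exp_split hT' (b / 2) μ n
    calc Real.exp ((y * ((n : ℝ) + 1 / 2) - μ) / T) * (((n : ℝ) + 1 / 2) / T) /
        (Real.exp ((y * ((n : ℝ) + 1 / 2) - μ) / T) + 1) ^ 2
        = ((n : ℝ) + 1 / 2) / T * (Real.exp ((y * ((n : ℝ) + 1 / 2) - μ) / T) /
          (Real.exp ((y * ((n : ℝ) + 1 / 2) - μ) / T) + 1) ^ 2) := by ring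
      _ ≤ ((n : ℝ) + 1 / 2) / T *
          (Real.exp ((μ - b / 2 / 2) / T) * Real.exp (-(b / 2 / T)) ^ n) :=
          mul_le_mul_of_nonneg_left h1 (by positivity)
      _ = Real.exp ((μ - b / 2 / 2) / T) / T *
          (((n : ℝ) + 1 / 2) * Real.exp (-(b / 2 / T)) ^ n) := by ring
  -- derivative of the magnetization series in μ
  have hG : HasDerivAt (fun y : ℝ => ∑' n : ℕ,
      ((n : ℝ) + 1 / 2) * (Real.exp ((b * ((n : ℝ) + 1 / 2) - y) / T) + 1)⁻¹)
      (∑' n : ℕ, ((n : ℝ) + 1 / 2) *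
        (Real.exp ((b * ((n : ℝ) + 1 / 2) - μ) / T) * (1 / T) /
          (Real.exp ((b * ((n : ℝ) + 1 / 2) - μ) / T) + 1) ^ 2)) μ := by
    refine hasDerivAt_tsum_of_isPreconnected
      (u := fun n : ℕ => Real.exp ((μ + 1 - b / 2) / T) / T *
        (((n : ℝ) + 1 / 2) * Real.exp (-(b / T)) ^ n))
      (sumAux _ hr1_0 hr1) isOpen_Ioo isPreconnected_Ioo
      (y₀ := μ) (t := Set.Ioo (μ - 1) (μ + 1))
      (fun n y _ => hdmu b T n y) (fun n y hy => ?_)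
      (Set.mem_Ioo.mpr ⟨by linarith, by linarith⟩)
      hs2 (Set.mem_Ioo.mpr ⟨by linarith, by linarith⟩)
    have hy' : y ≤ μ + 1 := le_of_lt hy.2
    have hnn : (0:ℝ) ≤ ((n : ℝ) + 1 / 2) *
        (Real.exp ((b * ((n : ℝ) + 1 / 2) - y) / T) * (1 / T) /
          (Real.exp ((b * ((n : ℝ) + 1 / 2) - y) / T) + 1) ^ 2) := by positivity
    rw [Real.norm_eq_abs, abs_of_nonneg hnn]
    have h1 : Real.exp ((b * ((n : ℝ) + 1 / 2) - y) / T) /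
        (Real.exp ((b * ((n : ℝ) + 1 / 2) - y) / T) + 1) ^ 2 ≤
        Real.exp ((μ + 1 - b / 2) / T) * Real.exp (-(b / T)) ^ n := by
      calc Real.exp ((b * ((n : ℝ) + 1 / 2) - y) / T) /
          (Real.exp ((b * ((n : ℝ) + 1 / 2) - y) / T) + 1) ^ 2
          ≤ Real.exp (-((b * ((n : ℝ) + 1 / 2) - y) / T)) := frac_le _
        _ ≤ Real.exp (-((b * ((n : ℝ) + 1 / 2) - (μ + 1)) / T)) := by
            apply Real.exp_le_exp.mpr
            apply neg_le_neg
            apply (div_le_div_iff_of_pos_right hT).mpr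
            linarith
        _ = Real.exp ((μ + 1 - b / 2) / T) * Real.exp (-(b / T)) ^ n :=
            exp_split hT' b (μ + 1) n
    calc ((n : ℝ) + 1 / 2) *
        (Real.exp ((b * ((n : ℝ) + 1 / 2) - y) / T) * (1 / T) /
          (Real.exp ((b * ((n : ℝ) + 1 / 2) - y) / T) + 1) ^ 2)
        = ((n : ℝ) + 1 / 2) / T * (Real.exp ((b * ((n : ℝ) + 1 / 2) - y) / T) /
          (Real.exp ((b * ((n : ℝ) + 1 / 2) - y) / T) + 1) ^ 2) := by ring
      _ ≤ ((n : ℝ) + 1 / 2) / T *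
          (Real.exp ((μ + 1 - b / 2) / T) * Real.exp (-(b / T)) ^ n) :=
          mul_le_mul_of_nonneg_left h1 (by positivity)
      _ = Real.exp ((μ + 1 - b / 2) / T) / T *
          (((n : ℝ) + 1 / 2) * Real.exp (-(b / T)) ^ n) := by ring
  -- assemble
  have hQ : (∑' n : ℕ, ((n : ℝ) + 1 / 2) *
      (Real.exp ((b * ((n : ℝ) + 1 / 2) - μ) / T) * (1 / T) /
        (Real.exp ((b * ((n : ℝ) + 1 / 2) - μ) / T) + 1) ^ 2)) =
      -(∑' n : ℕ, (-(Real.exp ((b * ((n : ℝ) + 1 / 2) - μ) / T) * (((n : ℝ) + 1 / 2) / T)) /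
        (Real.exp ((b * ((n : ℝ) + 1 / 2) - μ) / T) + 1) ^ 2)) := by
    rw [← tsum_neg]
    exact tsum_congr fun n => by ring
  have hid : HasDerivAt (fun y : ℝ => y / (2 * Real.pi)) (1 / (2 * Real.pi)) b := by
    simpa using (hasDerivAt_id b).div_const (2 * Real.pi)
  have hD : HasDerivAt (fun b' : ℝ => landauDensity b' T μ)
      (1 / (2 * Real.pi) * (∑' n : ℕ, (Real.exp ((b * ((n : ℝ) + 1 / 2) - μ) / T) + 1)⁻¹) +
        b / (2 * Real.pi) *
          (∑' n : ℕ, (-(Real.exp ((b * ((n : ℝ) + 1 / 2) - μ) / T) * (((n : ℝ) + 1 / 2) / T)) /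
            (Real.exp ((b * ((n : ℝ) + 1 / 2) - μ) / T) + 1) ^ 2))) b := by
    have := hid.mul hF
    exact this
  have hM : HasDerivAt (fun μ' : ℝ => landauMcirc e b T μ')
      (e * (b / (2 * Real.pi)) *
        (-(∑' n : ℕ, (-(Real.exp ((b * ((n : ℝ) + 1 / 2) - μ) / T) * (((n : ℝ) + 1 / 2) / T)) /
          (Real.exp ((b * ((n : ℝ) + 1 / 2) - μ) / T) + 1) ^ 2)))) μ := by
    have := hG.const_mul (e * (b / (2 * Real.pi)))
    rw [hQ] at this
    simpa only [landauMcirc] using this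
  refine ⟨_, _, hD, hM, ?_⟩
  have hπ : Real.pi ≠ 0 := Real.pi_ne_zero
  have hb' : b ≠ 0 := ne_of_gt hb
  simp only [landauDensity]
  field_simp
  ring

end
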